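/- arXiv:2410.11156 — 3 statements merged into one kernel-verified Lean document; each statement's English description precedes it below -/
import Mathlib

section
/- Let S be a type, s ∈ S, and φ a predicate over S. Then λ⁺(s, φ) = 0 if and only if s ⊨ φ. -/
/-- Predicates over a state space `S`:
`φ ::= ⊤ | ⊥ | (μ ≥ 0) | φ ∧ φ | φ ∨ φ` where each atom carries `μ : S → ℝ`. -/
inductive Phi (S : Type*) where
  | top : Phi S
  | bot : Phi S
  | atom (μ : S → ℝ) : Phi S
  | and (φ₁ φ₂ : Phi S) : Phi S
  | or (φ₁ φ₂ : Phi S) : Phi S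

/-- Satisfaction `s ⊨ φ` of a predicate by a state. -/
def Phi.Sat {S : Type*} (s : S) : Phi S → Prop
  | .top => True
  | .bot => False
  | .atom μ => μ s ≥ 0
  | .and φ₁ φ₂ => φ₁.Sat s ∧ φ₂.Sat s
  | .or φ₁ φ₂ => φ₁.Sat s ∨ φ₂.Sat s

/-- The `(max,+)` generalized weight `λ⁺ : S × Φ → EReal`. -/
noncomputable def lamP {S : Type*} (s : S) : Phi S → EReal
  | .top => 0
  | .bot => ⊥
  | .atom μ => if μ s ≥ 0 then 0 else ((μ s : ℝ) : EReal)
  | .and φ₁ φ₂ => lamP s φ₁ + lamP s φ₂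
  | .or φ₁ φ₂ => max (lamP s φ₁) (lamP s φ₂)


lemma lamP_nonpos {S : Type*} (s : S) (φ : Phi S) : lamP s φ ≤ 0 := by
  induction φ with
  | top => simp [lamP]
  | bot => simp [lamP]
  | atom μ =>
    simp only [lamP]
    split
    · exact le_refl 0
    · exact_mod_cast le_of_lt (lt_of_not_ge ‹¬ μ s ≥ 0›)
  | and φ₁ φ₂ ih₁ ih₂ =>
    calc lamP s (φ₁.and φ₂) = lamP s φ₁ + lamP s φ₂ := rfl
    _ ≤ 0 + 0 := add_le_add ih₁ ih₂
    _ = 0 := by simp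
  | or φ₁ φ₂ ih₁ ih₂ => exact max_le ih₁ ih₂

/-- **The `(max,+)` weight vanishes exactly on satisfying states.**
For every state `s` and predicate `φ`, `λ⁺(s, φ) = 0` iff `s ⊨ φ`. -/
theorem lamP_eq_zero_iff_sat {S : Type*} (s : S) (φ : Phi S) :
    lamP s φ = 0 ↔ φ.Sat s := by
  induction φ with
  | top => simp [lamP, Phi.Sat]
  | bot => simp [lamP, Phi.Sat]
  | atom μ =>
    simp only [lamP, Phi.Sat]
    split
    · simpa
    · constructor
      · intro h
        exact absurd (by exact_mod_cast h : μ s = 0).ge ‹¬ μ s ≥ 0›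
      · intro h; exact absurd h ‹¬ μ s ≥ 0›
  | and φ₁ φ₂ ih₁ ih₂ =>
    have h₁ := lamP_nonpos s φ₁
    have h₂ := lamP_nonpos s φ₂
    constructor
    · intro h
      have e₁ : lamP s φ₁ = 0 := by
        by_contra hne
        have : lamP s φ₁ < 0 := lt_of_le_of_ne h₁ hne
        have : lamP s φ₁ + lamP s φ₂ < 0 :=
          lt_of_le_of_lt (by calc lamP s φ₁ + lamP s φ₂ ≤ lamP s φ₁ + 0 := add_le_add le_rfl h₂
                               _ = lamP s φ₁ := by simp) this
        exact absurd h this.ne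
      have e₂ : lamP s φ₂ = 0 := by
        have : lamP s (φ₁.and φ₂) = lamP s φ₁ + lamP s φ₂ := rfl
        rw [this, e₁, zero_add] at h
        exact h
      exact ⟨ih₁.mp e₁, ih₂.mp e₂⟩
    · rintro ⟨hs₁, hs₂⟩
      show lamP s φ₁ + lamP s φ₂ = 0
      rw [ih₁.mpr hs₁, ih₂.mpr hs₂, zero_add]
  | or φ₁ φ₂ ih₁ ih₂ =>
    show max (lamP s φ₁) (lamP s φ₂) = 0 ↔ _
    rw [Phi.Sat, ← ih₁, ← ih₂]
    constructor
    · intro h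
      rcases max_cases (lamP s φ₁) (lamP s φ₂) with ⟨he, _⟩ | ⟨he, _⟩
      · exact Or.inl (he ▸ h)
      · exact Or.inr (he ▸ h)
    · rintro (h | h)
      · exact le_antisymm (max_le (lamP_nonpos s φ₁) (lamP_nonpos s φ₂)) (h ▸ le_max_left _ _)
      · exact le_antisymm (max_le (lamP_nonpos s φ₁) (lamP_nonpos s φ₂)) (h ▸ le_max_right _ _)
end

section
/- Let S be a type, s ∈ S, and φ a predicate over S. Then the (max,+) generalized weight is bounded above by the (min,max) generalized weight: λ⁺(s, φ) ≤ λᵐ(s, φ) in EReal. Consequently λ⁺(s, φ) ≤ min(0, ρ(s, φ)). -/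
/-- The `(min,max)` generalized weight `λᵐ : S × Φ → EReal`. -/
noncomputable def lamM {S : Type*} (s : S) : Phi S → EReal
  | .top => 0
  | .bot => ⊥
  | .atom μ => if μ s ≥ 0 then 0 else ((μ s : ℝ) : EReal)
  | .and φ₁ φ₂ => min (lamM s φ₁) (lamM s φ₂)
  | .or φ₁ φ₂ => max (lamM s φ₁) (lamM s φ₂)

/-- The robustness `ρ : S × Φ → EReal`. -/
noncomputable def rob {S : Type*} (s : S) : Phi S → EReal
  | .top => ⊤
  | .bot => ⊥
  | .atom μ => ((μ s : ℝ) : EReal)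
  | .and φ₁ φ₂ => min (rob s φ₁) (rob s φ₂)
  | .or φ₁ φ₂ => max (rob s φ₁) (rob s φ₂)

/-- **The `(max,+)` weight is bounded above by the `(min,max)` weight**, and
consequently by the robustness truncated at zero:
`λ⁺(s, φ) ≤ λᵐ(s, φ)` and `λ⁺(s, φ) ≤ min(0, ρ(s, φ))` in `EReal`. -/
theorem lamP_le_lamM {S : Type*} (s : S) (φ : Phi S) :
    lamP s φ ≤ lamM s φ ∧ lamP s φ ≤ min 0 (rob s φ) := by
  have key : ∀ ψ : Phi S, lamP s ψ ≤ lamM s ψ ∧ lamM s ψ ≤ 0 ∧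
      lamM s ψ = min 0 (rob s ψ) := by
    intro ψ
    induction ψ with
    | top => simp [lamP, lamM, rob]
    | bot => simp [lamP, lamM, rob]
    | atom μ =>
        by_cases h : μ s ≥ 0
        · have hge : (0 : EReal) ≤ (μ s : ℝ) := by exact_mod_cast h
          simp [lamP, lamM, rob, h, min_eq_left hge]
        · have hle : (μ s : EReal) ≤ 0 := by
            exact_mod_cast le_of_lt (not_le.mp h)
          simp [lamP, lamM, rob, h, hle, min_eq_right hle]
    | and φ₁ φ₂ ih₁ ih₂ =>
        obtain ⟨h1, h1', e1⟩ := ih₁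
        obtain ⟨h2, h2', e2⟩ := ih₂
        refine ⟨?_, ?_, ?_⟩
        · simp only [lamP, lamM, le_min_iff]
          constructor
          · calc lamP s φ₁ + lamP s φ₂ ≤ lamP s φ₁ + 0 :=
                add_le_add_right (h2.trans h2') _
              _ = lamP s φ₁ := add_zero _
              _ ≤ lamM s φ₁ := h1
          · calc lamP s φ₁ + lamP s φ₂ ≤ 0 + lamP s φ₂ :=
                add_le_add_left (h1.trans h1') _
              _ = lamP s φ₂ := zero_add _
              _ ≤ lamM s φ₂ := h2
        · exact min_le_of_left_le h1'
        · simp only [lamM, rob, e1, e2]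
          rw [min_min_min_comm, min_self]
    | or φ₁ φ₂ ih₁ ih₂ =>
        obtain ⟨h1, h1', e1⟩ := ih₁
        obtain ⟨h2, h2', e2⟩ := ih₂
        refine ⟨max_le_max h1 h2, max_le h1' h2', ?_⟩
        simp only [lamM, rob, e1, e2]
        rw [min_max_distrib_left]
  obtain ⟨h, h', e⟩ := key φ
  exact ⟨h, e ▸ h⟩
end

section
/- Let S be a type, Q a finite type of locations with subsets Q₀ (initial) and Q_F (accepting), Δ : Q → Q → Φ a transition labeling by predicates over S, and ξ = (x_0, …, x_l) ∈ S^{l+1} a trace. Define the (min,max) weight of ξ as wᵐ(ξ) = sup over all location sequences (q_0, …, q_{l+1}) with q_0 ∈ Q₀ and q_{l+1} ∈ Q_F of min_{0 ≤ t ≤ l} λᵐ(x_t, Δ(q_t, q_{t+1})) (supremum in EReal, equal to -∞ if no such sequence exists). Then wᵐ(ξ) = 0 if and only if ξ ⊨ A, i.e., there exists a sequence (q_0, …, q_{l+1}) with q_0 ∈ Q₀, q_{l+1} ∈ Q_F, and x_t ⊨ Δ(q_t, q_{t+1}) for all 0 ≤ t ≤ l. -/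
lemma lamM_nonpos {S : Type*} (s : S) (φ : Phi S) : lamM s φ ≤ 0 := by
  induction φ with
  | top => simp [lamM]
  | bot => simp [lamM]
  | atom μ =>
    simp only [lamM]
    split
    · exact le_refl 0
    · exact le_of_lt (by exact_mod_cast lt_of_not_ge (by assumption) : ((μ s : ℝ) : EReal) < 0)
  | and φ₁ φ₂ ih1 ih2 => exact min_le_of_left_le ih1
  | or φ₁ φ₂ ih1 ih2 => exact max_le ih1 ih2

lemma lamM_eq_zero_iff {S : Type*} (s : S) (φ : Phi S) : lamM s φ = 0 ↔ Phi.Sat s φ := by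
  induction φ with
  | top => simp [lamM, Phi.Sat]
  | bot => simp [lamM, Phi.Sat]
  | atom μ =>
    simp only [lamM, Phi.Sat]
    split
    · simpa
    · rename_i h
      constructor
      · intro h0
        exact absurd ((EReal.coe_eq_zero).mp h0 ▸ le_refl (0:ℝ)) h
      · intro h0; exact absurd h0 h
  | and φ₁ φ₂ ih1 ih2 =>
    simp only [lamM, Phi.Sat, ← ih1, ← ih2]
    constructor
    · intro h
      exact ⟨le_antisymm (lamM_nonpos s φ₁) (h ▸ min_le_left _ _),
        le_antisymm (lamM_nonpos s φ₂) (h ▸ min_le_right _ _)⟩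
    · rintro ⟨h1, h2⟩; rw [h1, h2]; simp
  | or φ₁ φ₂ ih1 ih2 =>
    simp only [lamM, Phi.Sat, ← ih1, ← ih2]
    constructor
    · intro h
      rcases max_cases (lamM s φ₁) (lamM s φ₂) with ⟨he, _⟩ | ⟨he, _⟩ <;> rw [he] at h
      · exact Or.inl h
      · exact Or.inr h
    · rintro (h | h)
      · exact le_antisymm (max_le (lamM_nonpos s φ₁) (lamM_nonpos s φ₂)) (h ▸ le_max_left _ _)
      · exact le_antisymm (max_le (lamM_nonpos s φ₁) (lamM_nonpos s φ₂)) (h ▸ le_max_right _ _)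

/-- **The `(min,max)` trace weight vanishes exactly on accepted traces.** -/
theorem minmax_trace_weight_eq_zero_iff_accepted
    {S Q : Type*} [Fintype Q] (Q₀ QF : Set Q) (Δ : Q → Q → Phi S)
    (l : ℕ) (x : Fin (l + 1) → S) :
    (⨆ q : {q : Fin (l + 2) → Q // q 0 ∈ Q₀ ∧ q (Fin.last (l + 1)) ∈ QF},
        ⨅ t : Fin (l + 1), lamM (x t) (Δ (q.1 t.castSucc) (q.1 t.succ))) = 0 ↔
      ∃ q : Fin (l + 2) → Q, q 0 ∈ Q₀ ∧ q (Fin.last (l + 1)) ∈ QF ∧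
        ∀ t : Fin (l + 1), Phi.Sat (x t) (Δ (q t.castSucc) (q t.succ)) := by
  constructor
  · intro h
    by_cases hne : Nonempty {q : Fin (l + 2) → Q // q 0 ∈ Q₀ ∧ q (Fin.last (l + 1)) ∈ QF}
    · obtain ⟨q, hq⟩ := Finite.exists_max
        (fun q : {q : Fin (l + 2) → Q // q 0 ∈ Q₀ ∧ q (Fin.last (l + 1)) ∈ QF} =>
          ⨅ t : Fin (l + 1), lamM (x t) (Δ (q.1 t.castSucc) (q.1 t.succ)))
      have hsup : (⨆ q : {q : Fin (l + 2) → Q // q 0 ∈ Q₀ ∧ q (Fin.last (l + 1)) ∈ QF},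
          ⨅ t : Fin (l + 1), lamM (x t) (Δ (q.1 t.castSucc) (q.1 t.succ)))
          = ⨅ t : Fin (l + 1), lamM (x t) (Δ (q.1 t.castSucc) (q.1 t.succ)) :=
        le_antisymm (iSup_le hq) (le_iSup (fun q' : {q : Fin (l + 2) → Q // q 0 ∈ Q₀ ∧ q (Fin.last (l + 1)) ∈ QF} => ⨅ t : Fin (l + 1), lamM (x t) (Δ (q'.1 t.castSucc) (q'.1 t.succ))) q)
      rw [h] at hsup
      refine ⟨q.1, q.2.1, q.2.2, fun t => ?_⟩
      rw [← lamM_eq_zero_iff]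
      exact le_antisymm (lamM_nonpos _ _) (hsup ▸ iInf_le _ t)
    · rw [not_nonempty_iff] at hne
      rw [iSup_of_empty] at h
      exact absurd h (by simp)
  · rintro ⟨q, h0, hF, hsat⟩
    refine le_antisymm (iSup_le fun q' => iInf_le_of_le 0 (lamM_nonpos _ _)) ?_
    have : (⨅ t : Fin (l + 1), lamM (x t) (Δ (q t.castSucc) (q t.succ))) = 0 := by
      refine le_antisymm (iInf_le_of_le 0 (lamM_nonpos _ _)) (le_iInf fun t => ?_)
      exact ((lamM_eq_zero_iff _ _).mpr (hsat t)).ge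
    calc (0 : EReal) = _ := this.symm
      _ ≤ _ := le_iSup (fun q' : {q : Fin (l + 2) → Q // q 0 ∈ Q₀ ∧ q (Fin.last (l + 1)) ∈ QF} =>
          ⨅ t : Fin (l + 1), lamM (x t) (Δ (q'.1 t.castSucc) (q'.1 t.succ))) ⟨q, h0, hF⟩
end
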